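/- Let X be a path-connected topological space with basepoint x. The assignment sending a loop γ : Path x x to the homotopy class of the continuous map ℓ_γ : ℝ/ℤ → X it induces (ℓ_γ(t mod 1) = γ(t) for t ∈ [0,1]) descends to a well-defined bijection from the set ConjClasses(π₁(X,x)) of conjugacy classes in the fundamental group of X at x onto the set of homotopy classes of continuous maps ℝ/ℤ → X. -/

import Mathlib

noncomputable section

/-- The setoid on the free loop space `C(ℝ/ℤ, X)` given by (free) homotopy of maps. -/
def freeLoopSetoid (X : Type*) [TopologicalSpace X] : Setoid C(AddCircle (1 : ℝ), X) :=
  ⟨ContinuousMap.Homotopic, ContinuousMap.Homotopic.equivalence⟩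

/-- `λ(X)`: the set of free homotopy classes of loops `ℝ/ℤ → X`. -/
abbrev FreeLoopClasses (X : Type*) [TopologicalSpace X] : Type _ :=
  Quotient (freeLoopSetoid X)


open Set unitInterval

noncomputable section

namespace Statement5Aux

attribute [local instance] Path.Homotopic.setoid

instance : ContractibleSpace unitInterval :=
  (convex_Icc (0:ℝ) 1).contractibleSpace ⟨0, by norm_num⟩

instance : ContractibleSpace (unitInterval × unitInterval) := by
  have h : Convex ℝ (Icc (0:ℝ) 1 ×ˢ Icc (0:ℝ) 1) := (convex_Icc 0 1).prod (convex_Icc 0 1)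
  have : ContractibleSpace ↥(Icc (0:ℝ) 1 ×ˢ Icc (0:ℝ) 1) :=
    h.contractibleSpace ⟨(0,0), by norm_num⟩
  exact ((Homeomorph.Set.prod _ _).symm.toHomotopyEquiv).contractibleSpace

variable {X : Type} [TopologicalSpace X]

theorem one_coe_eq : ((1:ℝ) : AddCircle (1:ℝ)) = ((0:ℝ) : AddCircle (1:ℝ)) := by
  rw [AddCircle.coe_period]; rfl

theorem surj_coe (z : AddCircle (1:ℝ)) : ∃ t : unitInterval, ((t:ℝ) : AddCircle (1:ℝ)) = z := by
  obtain ⟨w, hw⟩ : ∃ w : Ico (0:ℝ) (0+1), ((w:ℝ) : AddCircle (1:ℝ)) = z :=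
    ⟨AddCircle.equivIco 1 0 z, (AddCircle.equivIco 1 0).symm_apply_apply z⟩
  exact ⟨⟨w, w.2.1, le_of_lt (by simpa using w.2.2)⟩, hw⟩

theorem lift_apply {B : Type*} (f : unitInterval → B) (hf : f 0 = f 1) (t : unitInterval) :
    AddCircle.liftIco 1 0 (IccExtend zero_le_one f) ((t:ℝ) : AddCircle (1:ℝ)) = f t := by
  rcases eq_or_lt_of_le t.2.2 with h1 | h1
  · have ht : (t:ℝ) = 1 := h1
    have h0 : ((t:ℝ) : AddCircle (1:ℝ)) = ((0:ℝ) : AddCircle (1:ℝ)) := by rw [ht, one_coe_eq]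
    rw [h0]
    rw [AddCircle.liftIco_coe_apply (f := IccExtend zero_le_one f) (p := (1:ℝ)) (a := 0)
      (x := 0) (by constructor <;> norm_num)]
    have h2 : IccExtend (zero_le_one (α := ℝ)) f 0 = f 0 := by simp
    rw [h2, hf]
    congr 1
    ext; exact ht.symm
  · rw [AddCircle.liftIco_coe_apply (f := IccExtend zero_le_one f) (p := (1:ℝ)) (a := 0)
      (x := (t:ℝ)) ⟨t.2.1, by simpa using h1⟩,
      IccExtend_of_mem _ _ (by simpa using t.2 : (t:ℝ) ∈ Icc (0:ℝ) 1)]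

/-- The circle map `ℝ/ℤ → X` induced by a loop. -/
def loopMap {a : X} (γ : Path a a) : C(AddCircle (1:ℝ), X) :=
  ⟨AddCircle.liftIco 1 0 (IccExtend zero_le_one γ),
   AddCircle.liftIco_zero_continuous (by simp) (γ.continuous.Icc_extend').continuousOn⟩

theorem loopMap_apply {a : X} (γ : Path a a) (t : unitInterval) :
    loopMap γ ((t:ℝ) : AddCircle (1:ℝ)) = γ t :=
  lift_apply γ (by rw [γ.source, γ.target]) t

theorem loopMap_unique {a : X} (γ : Path a a) (ℓ : C(AddCircle (1:ℝ), X))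
    (h : ∀ t : unitInterval, ℓ ((t:ℝ) : AddCircle (1:ℝ)) = γ t) : ℓ = loopMap γ := by
  ext z
  obtain ⟨t, rfl⟩ := surj_coe z
  rw [h t, loopMap_apply]

/-- Descend a homotopy on the square, whose two vertical edges agree,
to a free homotopy of circle maps. -/
theorem descend {a b : X} {γ₁ : Path a a} {γ₂ : Path b b} (K : C(unitInterval × unitInterval, X))
    (hK0 : ∀ s, K (0, s) = K (1, s))
    (hKb : ∀ t, K (t, 0) = γ₁ t) (hKt : ∀ t, K (t, 1) = γ₂ t) :
    (loopMap γ₁).Homotopic (loopMap γ₂) := by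
  let K' : C(unitInterval, C(unitInterval, X)) := K.curry
  have hf : IccExtend zero_le_one K' 0 = IccExtend zero_le_one K' (0 + 1) := by
    simp only [zero_add]
    rw [IccExtend_of_mem _ _ (by norm_num : (0:ℝ) ∈ Icc (0:ℝ) 1),
        IccExtend_of_mem _ _ (by norm_num : (1:ℝ) ∈ Icc (0:ℝ) 1)]
    ext s
    exact hK0 s
  let Φ : C(AddCircle (1:ℝ), C(unitInterval, X)) :=
    ⟨AddCircle.liftIco 1 0 (IccExtend zero_le_one K'),
     AddCircle.liftIco_continuous hf (K'.continuous.Icc_extend').continuousOn⟩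
  have key : ∀ (t s : unitInterval), Φ ((t:ℝ) : AddCircle (1:ℝ)) s = K (t, s) := by
    intro t s
    have h := lift_apply (B := C(unitInterval, X)) K' (by ext s; exact hK0 s) t
    rw [show Φ ((t:ℝ) : AddCircle (1:ℝ)) = K' t from h]
    rfl
  refine ⟨{ toFun := fun p => Φ p.2 p.1
            continuous_toFun := (Φ.uncurry.comp ⟨Prod.swap, continuous_swap⟩).continuous
            map_zero_left := ?_
            map_one_left := ?_ }⟩
  · intro z
    obtain ⟨t, rfl⟩ := surj_coe z
    simp only [ContinuousMap.coe_mk]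
    rw [key t 0, hKb t, ← loopMap_apply]
  · intro z
    obtain ⟨t, rfl⟩ := surj_coe z
    simp only [ContinuousMap.coe_mk]
    rw [key t 1, hKt t, ← loopMap_apply]

/-- Based-homotopic loops induce freely homotopic circle maps. -/
theorem loopMap_homotopic {a : X} {γ₁ γ₂ : Path a a} (h : γ₁.Homotopic γ₂) :
    (loopMap γ₁).Homotopic (loopMap γ₂) := by
  obtain ⟨G⟩ := h
  refine descend ⟨fun p => G (p.2, p.1), G.continuous.comp (by continuity)⟩ ?_ ?_ ?_
  · intro s
    simp only [ContinuousMap.coe_mk]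
    rw [Path.Homotopy.source G s, Path.Homotopy.target G s]
  · intro t; exact G.apply_zero t
  · intro t; exact G.apply_one t

def ψ (t s : unitInterval) : unitInterval :=
  ⟨(s:ℝ)/2 + (t:ℝ)*(1 - 3*(s:ℝ)/4), by
    have h1 := t.2.1; have h2 := t.2.2; have h3 := s.2.1; have h4 := s.2.2
    constructor
    · nlinarith
    · nlinarith⟩

@[simp] theorem ψ_coe (t s : unitInterval) :
    (ψ t s : ℝ) = (s:ℝ)/2 + (t:ℝ)*(1 - 3*(s:ℝ)/4) := rfl

theorem apC {c d : X} (r : Path c d) (u v : unitInterval) (h : (u:ℝ) = (v:ℝ)) : r u = r v :=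
  congrArg r (Subtype.ext h)

/-- Shrinking the conjugating path: `q ⬝ γ ⬝ q⁻¹` and `γ` induce freely homotopic maps. -/
theorem loopMap_conj {a b : X} (q : Path a b) (γ : Path b b) :
    (loopMap (q.trans (γ.trans q.symm))).Homotopic (loopMap γ) := by
  set L := q.trans (γ.trans q.symm) with hL
  have hcont : Continuous fun p : I × I => L (ψ p.1 p.2) := by
    apply L.continuous.comp
    apply Continuous.subtype_mk
    continuity
  refine descend ⟨fun p => L (ψ p.1 p.2), hcont⟩ ?_ ?_ ?_
  · intro s
    have h3 := s.2.1; have h4 := s.2.2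
    simp only [ContinuousMap.coe_mk]
    have e0 : L (ψ 0 s) = q s := by
      rw [hL]
      simp only [Path.trans_apply, ψ_coe, Icc.coe_zero, Icc.coe_one]
      split_ifs with h1 h2
      · exact apC q _ _ (by dsimp only; ring)
      · exfalso; rw [not_le] at h1; linarith
      · exfalso; rw [not_le] at h1; linarith
    have e1 : L (ψ 1 s) = q s := by
      rw [hL]
      simp only [Path.trans_apply, ψ_coe, Icc.coe_zero, Icc.coe_one]
      split_ifs with h1 h2
      · exfalso; nlinarith
      · have hs : (s:ℝ) = 1 := by rw [not_le] at h1; linarith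
        have e2 : q s = q 1 := apC q _ _ (by simp [hs])
        rw [e2, q.target]
        convert γ.target using 2
        refine Subtype.ext ?_
        show 2 * (2 * ((s:ℝ)/2 + 1*(1 - 3*(s:ℝ)/4)) - 1) = ((1:I):ℝ)
        rw [Icc.coe_one]
        linear_combination (-1 : ℝ) * hs
      · rw [Path.symm_apply]
        refine apC q _ _ ?_
        rw [coe_symm_eq]
        show 1 - (2 * (2 * ((s:ℝ)/2 + 1*(1 - 3*(s:ℝ)/4)) - 1) - 1) = (s:ℝ)
        ring
    rw [e0, e1]
  · intro t
    simp only [ContinuousMap.coe_mk]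
    exact congrArg L (Subtype.ext (by simp))
  · intro t
    have h3 := t.2.1; have h4 := t.2.2
    simp only [ContinuousMap.coe_mk]
    rw [hL]
    simp only [Path.trans_apply, ψ_coe, Icc.coe_zero, Icc.coe_one]
    split_ifs with h1 h2
    · have ht : (t:ℝ) = 0 := le_antisymm (by linarith) h3
      have e2 : γ t = γ 0 := apC γ _ _ (by simp [ht])
      rw [e2, γ.source]
      convert q.target using 2
      refine Subtype.ext ?_
      show 2 * ((1:ℝ)/2 + (t:ℝ)*(1 - 3*1/4)) = ((1:I):ℝ)
      rw [Icc.coe_one]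
      linear_combination (1/2 : ℝ) * ht
    · refine apC γ _ _ ?_
      show 2 * (2 * ((1:ℝ)/2 + (t:ℝ)*(1 - 3*1/4)) - 1) = (t:ℝ)
      ring
    · exfalso
      rw [not_le] at h2
      linarith

/-- Combined: if `γ` is based-homotopic to `q ⬝ γ' ⬝ q⁻¹` then the circle maps are
freely homotopic. -/
theorem loopMap_conj' {a b : X} {γ : Path a a} {γ' : Path b b} (q : Path a b)
    (h : γ.Homotopic (q.trans (γ'.trans q.symm))) :
    (loopMap γ).Homotopic (loopMap γ') :=
  (loopMap_homotopic h).trans (loopMap_conj q γ')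


/-! ### From free homotopies back to conjugation -/

def eB : Path ((0:I), (0:I)) ((1:I), (0:I)) :=
  ⟨⟨fun t => (t, 0), by continuity⟩, rfl, rfl⟩
def eL : Path ((0:I), (0:I)) ((0:I), (1:I)) :=
  ⟨⟨fun s => (0, s), by continuity⟩, rfl, rfl⟩
def eT : Path ((0:I), (1:I)) ((1:I), (1:I)) :=
  ⟨⟨fun t => (t, 1), by continuity⟩, rfl, rfl⟩
def eR : Path ((1:I), (0:I)) ((1:I), (1:I)) :=
  ⟨⟨fun s => (1, s), by continuity⟩, rfl, rfl⟩

theorem homotopic_cast {Y : Type*} [TopologicalSpace Y] {a b a' b' : Y} {p p' : Path a b}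
    (h : p.Homotopic p') (ha : a' = a) (hb : b' = b) :
    (p.cast ha hb).Homotopic (p'.cast ha hb) := by
  subst ha; subst hb
  have h1 : p.cast rfl rfl = p := by ext t; rfl
  have h2 : p'.cast rfl rfl = p' := by ext t; rfl
  rw [h1, h2]; exact h

/-- If the circle maps of two loops are freely homotopic, the loops are conjugate
via some connecting path. -/
theorem homotopic_loopMap {a b : X} (γ₁ : Path a a) (γ₂ : Path b b)
    (h : (loopMap γ₁).Homotopic (loopMap γ₂)) :
    ∃ q : Path a b, γ₁.Homotopic (q.trans (γ₂.trans q.symm)) := by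
  obtain ⟨H⟩ := h
  have hcM : Continuous fun p : I × I => H (p.2, (((p.1 : ℝ)) : AddCircle (1:ℝ))) := by
    apply H.continuous.comp
    exact continuous_snd.prodMk
      ((AddCircle.continuous_mk' 1).comp (continuous_subtype_val.comp continuous_fst))
  let M : C(I × I, X) := ⟨fun p => H (p.2, (((p.1 : ℝ)) : AddCircle (1:ℝ))), hcM⟩
  have hco : ((((1:I) : ℝ)) : AddCircle (1:ℝ)) = ((((0:I) : ℝ)) : AddCircle (1:ℝ)) := by
    rw [Icc.coe_one, Icc.coe_zero, one_coe_eq]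
  have hM10 : ∀ s : I, M (1, s) = M (0, s) := by
    intro s
    show H (s, _) = H (s, _)
    rw [hco]
  have hM00 : M (0, 0) = a := by
    show H (0, _) = a
    rw [H.apply_zero, loopMap_apply, γ₁.source]
  have hM10b : M (1, 0) = a := by
    show H (0, _) = a
    rw [H.apply_zero, loopMap_apply, γ₁.target]
  have hM01 : M (0, 1) = b := by
    show H (1, _) = b
    rw [H.apply_one, loopMap_apply, γ₂.source]
  refine ⟨(eL.map M.continuous).cast hM00.symm hM01.symm, ?_⟩
  set q : Path a b := (eL.map M.continuous).cast hM00.symm hM01.symm with hq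
  have hsq : (eB).Homotopic (eL.trans (eT.trans eR.symm)) :=
    SimplyConnectedSpace.paths_homotopic _ _
  have hcast := homotopic_cast (hsq.map M) hM00.symm hM10b.symm
  have id1 : γ₁ = (eB.map M.continuous).cast hM00.symm hM10b.symm := by
    ext t
    show γ₁ t = H (0, _)
    rw [H.apply_zero, loopMap_apply]
    rfl
  have id2 : q.trans (γ₂.trans q.symm)
      = ((eL.trans (eT.trans eR.symm)).map M.continuous).cast hM00.symm hM10b.symm := by
    ext t
    show (q.trans (γ₂.trans q.symm)) t = M ((eL.trans (eT.trans eR.symm)) t)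
    simp only [Path.trans_apply]
    split_ifs with h1 h2
    · rfl
    · show γ₂ _ = H (1, _)
      rw [H.apply_one, loopMap_apply]
      rfl
    · exact (hM10 _).symm
  rw [id1, id2]
  exact hcast


def pathOf (ℓ : C(AddCircle (1:ℝ), X)) :
    Path (ℓ ((0:ℝ) : AddCircle (1:ℝ))) (ℓ ((0:ℝ) : AddCircle (1:ℝ))) where
  toFun t := ℓ (((t : ℝ)) : AddCircle (1:ℝ))
  continuous_toFun := ℓ.continuous.comp ((AddCircle.continuous_mk' 1).comp continuous_subtype_val)
  source' := by
    show ℓ ((((0:I) : ℝ)) : AddCircle (1:ℝ)) = ℓ ((0:ℝ) : AddCircle (1:ℝ))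
    rw [Icc.coe_zero]
  target' := by
    show ℓ ((((1:I) : ℝ)) : AddCircle (1:ℝ)) = ℓ ((0:ℝ) : AddCircle (1:ℝ))
    rw [Icc.coe_one, one_coe_eq]

/-! ### Fundamental group algebra -/

open CategoryTheory

theorem fromPath_trans {Y : TopCat} {y : Y} (p p' : Path y y) :
    FundamentalGroup.fromPath (X := Y) ⟦p.trans p'⟧ =
      FundamentalGroup.fromPath (X := Y) ⟦p'⟧ * FundamentalGroup.fromPath (X := Y) ⟦p⟧ := by
  rfl

theorem fromPath_refl {Y : TopCat} {y : Y} :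
    FundamentalGroup.fromPath (X := Y) ⟦Path.refl y⟧ = 1 := by
  rfl

theorem fromPath_symm {Y : TopCat} {y : Y} (p : Path y y) :
    FundamentalGroup.fromPath (X := Y) ⟦p.symm⟧ = (FundamentalGroup.fromPath (X := Y) ⟦p⟧)⁻¹ := by
  apply eq_inv_of_mul_eq_one_right
  rw [← fromPath_trans]
  rw [show (⟦p.symm.trans p⟧ : Path.Homotopic.Quotient y y) = ⟦Path.refl y⟧ from
    Quotient.sound ⟨(Path.Homotopy.reflSymmTrans p).symm⟩]
  exact fromPath_refl

theorem fromPath_injective {Y : TopCat} {y : Y} :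
    Function.Injective (FundamentalGroup.fromPath (X := Y) (x := y)) :=
  fun _ _ h => h

theorem fromPath_toPath {Y : TopCat} {y : Y} (g : FundamentalGroup Y y) :
    FundamentalGroup.fromPath (X := Y) (FundamentalGroup.toPath g) = g := by
  rfl

end Statement5Aux

open Statement5Aux

attribute [local instance] Path.Homotopic.setoid

/-- For a path-connected space `X` with basepoint `x`, sending a loop
`γ : Path x x` to the free homotopy class of the induced map `ℝ/ℤ → X` descends to a
well-defined bijection from the conjugacy classes of `π₁(X, x)` onto `λ(X)`. -/
theorem statement5 (X : Type) [TopologicalSpace X] [PathConnectedSpace X] (x : X) :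
    ∃ F : ConjClasses (FundamentalGroup X x) → FreeLoopClasses X,
      Function.Bijective F ∧
      ∀ (γ : Path x x) (ℓ : C(AddCircle (1 : ℝ), X)),
        (∀ t : unitInterval, ℓ ((t : ℝ) : AddCircle (1 : ℝ)) = γ t) →
        F (ConjClasses.mk (FundamentalGroup.fromPath (X := TopCat.of X)
            (Quotient.mk (Path.Homotopic.setoid x x) γ))) =
          Quotient.mk (freeLoopSetoid X) ℓ := by
  classical
  let f₁ : Path.Homotopic.Quotient x x → FreeLoopClasses X :=
    Quotient.lift (fun γ : Path x x => Quotient.mk (freeLoopSetoid X) (loopMap γ))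
      (fun γ₁ γ₂ h => Quotient.sound (s := freeLoopSetoid X) (loopMap_homotopic h))
  let f₀ : FundamentalGroup X x → FreeLoopClasses X :=
    fun g => f₁ (FundamentalGroup.toPath (X := TopCat.of X) g)
  have wd : ∀ g₁ g₂ : FundamentalGroup X x, IsConj g₁ g₂ → f₀ g₁ = f₀ g₂ := by
    intro g₁ g₂ hconj
    obtain ⟨c, hc⟩ := isConj_iff.mp hconj
    obtain ⟨γ₁, hγ₁⟩ := Quotient.exists_rep (FundamentalGroup.toPath (X := TopCat.of X) g₁)
    obtain ⟨γ₂, hγ₂⟩ := Quotient.exists_rep (FundamentalGroup.toPath (X := TopCat.of X) g₂)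
    obtain ⟨δ, hδ⟩ := Quotient.exists_rep (FundamentalGroup.toPath (X := TopCat.of X) c)
    have e₁ : FundamentalGroup.fromPath (X := TopCat.of X) ⟦γ₁⟧ = g₁ := by
      rw [hγ₁]
    have e₂ : FundamentalGroup.fromPath (X := TopCat.of X) ⟦γ₂⟧ = g₂ := by
      rw [hγ₂]
    have ec : FundamentalGroup.fromPath (X := TopCat.of X) ⟦δ⟧ = c := by
      rw [hδ]
    have key : FundamentalGroup.fromPath (X := TopCat.of X) ⟦δ.symm.trans (γ₁.trans δ)⟧ = g₂ := by
      rw [fromPath_trans (Y := TopCat.of X), fromPath_trans (Y := TopCat.of X), fromPath_symm (Y := TopCat.of X), e₁, ec]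
      exact hc
    have hrel : (⟦γ₂⟧ : Path.Homotopic.Quotient x x) = ⟦δ.symm.trans (γ₁.trans δ)⟧ := by
      apply fromPath_injective (Y := TopCat.of X)
      rw [e₂, key]
    have hhom : γ₂.Homotopic (δ.symm.trans (γ₁.trans δ.symm.symm)) := by
      rw [Path.symm_symm]
      exact Quotient.exact hrel
    have E1 : f₀ g₁ = Quotient.mk (freeLoopSetoid X) (loopMap γ₁) := by
      show f₁ _ = _
      rw [← hγ₁]
      exact rfl
    have E2 : f₀ g₂ = Quotient.mk (freeLoopSetoid X) (loopMap γ₂) := by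
      show f₁ _ = _
      rw [← hγ₂]
      exact rfl
    rw [E1, E2]
    exact (Quotient.sound (s := freeLoopSetoid X) (loopMap_conj' δ.symm hhom)).symm
  let F : ConjClasses (FundamentalGroup X x) → FreeLoopClasses X :=
    fun cc => Quotient.lift f₀ (fun g₁ g₂ h => wd g₁ g₂ h) cc
  have hinj : Function.Injective F := by
    intro c₁ c₂ hF
    obtain ⟨g₁, rfl⟩ := ConjClasses.mk_surjective c₁
    obtain ⟨g₂, rfl⟩ := ConjClasses.mk_surjective c₂
    obtain ⟨γ₁, hγ₁⟩ := Quotient.exists_rep (FundamentalGroup.toPath (X := TopCat.of X) g₁)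
    obtain ⟨γ₂, hγ₂⟩ := Quotient.exists_rep (FundamentalGroup.toPath (X := TopCat.of X) g₂)
    have e₁ : FundamentalGroup.fromPath (X := TopCat.of X) ⟦γ₁⟧ = g₁ := by
      rw [hγ₁]
    have e₂ : FundamentalGroup.fromPath (X := TopCat.of X) ⟦γ₂⟧ = g₂ := by
      rw [hγ₂]
    have E1 : F (ConjClasses.mk g₁) = Quotient.mk (freeLoopSetoid X) (loopMap γ₁) := by
      show f₁ _ = _
      rw [← hγ₁]
      exact rfl
    have E2 : F (ConjClasses.mk g₂) = Quotient.mk (freeLoopSetoid X) (loopMap γ₂) := by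
      show f₁ _ = _
      rw [← hγ₂]
      exact rfl
    rw [E1, E2] at hF
    obtain ⟨q, hq⟩ := homotopic_loopMap γ₁ γ₂ (Quotient.exact hF)
    rw [ConjClasses.mk_eq_mk_iff_isConj]
    let cq : FundamentalGroup X x := FundamentalGroup.fromPath (X := TopCat.of X) ⟦q⟧
    have key : g₁ = (cq⁻¹ * g₂) * cq := by
      rw [← e₁, Quotient.sound hq, fromPath_trans (Y := TopCat.of X), fromPath_trans (Y := TopCat.of X), fromPath_symm (Y := TopCat.of X), e₂]
    rw [isConj_iff]
    refine ⟨cq, ?_⟩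
    rw [key]
    group
  have hsurj : Function.Surjective F := by
    intro d
    obtain ⟨ℓ, hℓ⟩ := Quotient.exists_rep d
    set a := ℓ ((0:ℝ) : AddCircle (1:ℝ)) with ha
    let p := PathConnectedSpace.somePath x a
    let γ : Path x x := p.trans ((pathOf ℓ).trans p.symm)
    refine ⟨ConjClasses.mk (FundamentalGroup.fromPath (X := TopCat.of X) ⟦γ⟧), ?_⟩
    have E : F (ConjClasses.mk (FundamentalGroup.fromPath (X := TopCat.of X) ⟦γ⟧)) =
        Quotient.mk (freeLoopSetoid X) (loopMap γ) := rfl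
    rw [E, ← hℓ]
    refine Quotient.sound (s := freeLoopSetoid X) ?_
    have h1 : (loopMap γ).Homotopic (loopMap (pathOf ℓ)) :=
      loopMap_conj' p (Path.Homotopic.refl _)
    have h2 : ℓ = loopMap (pathOf ℓ) := loopMap_unique _ ℓ (fun t => rfl)
    rw [h2]
    exact h1
  refine ⟨F, ⟨hinj, hsurj⟩, ?_⟩
  intro γ ℓ h
  have h2 : ℓ = loopMap γ := loopMap_unique γ ℓ h
  subst h2
  exact rfl
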